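/- Let n ≥ 2. In the category Crs(Grp) of reduced crossed complexes: (i) for every reduced crossed complex M, the inclusion of its truncation (⋯ → 0 → 0 → M_{n-1} → M_{n-2} → ⋯ → M₀) into M (identity in degrees ≤ n−1, trivial above) is a monomorphism in Crs(Grp), and these inclusions are the counit components of the coreflection of Crs(Grp) onto Crs(Grp)_{n-1≥}; (ii) the pair (Crs(Grp)_{n-1≥}, Crs(Grp)_{≥n}) is an ℰ-torsion theory in Crs(Grp), where ℰ is the class of reduced crossed complexes M in which M₀ acts trivially on M_i for all i ≥ n, the short exact sequence of M ∈ ℰ being given by its truncations keeping degrees ≤ n−1 and degrees ≥ n respectively; (iii) every reduced crossed complex M whose differential δ₁ : M₁ → M₀ is surjective belongs to ℰ. -/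

import Mathlib

open CategoryTheory CategoryTheory.Limits

universe v u

/-- A pair of composable morphisms is a short exact sequence if the composite is zero,
the first morphism is a kernel of the second and the second is a cokernel of the first. -/
def IsShortExact {C : Type u} [Category.{v} C] [HasZeroMorphisms C] {A X B : C}
    (i : A ⟶ X) (p : X ⟶ B) : Prop :=
  ∃ w : i ≫ p = 0,
    Nonempty (IsLimit (KernelFork.ofι i w)) ∧ Nonempty (IsColimit (CokernelCofork.ofπ p w))

/-- A torsion theory relative to a class `E` of objects. -/
structure IsRelTorsionTheory {C : Type u} [Category.{v} C] [HasZeroMorphisms C]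
    (E T F : C → Prop) : Prop where
  hom_zero : ∀ {X Y : C} (f : X ⟶ Y), T X → F Y → f = 0
  exists_seq : ∀ X : C, E X → ∃ (TX FX : C) (i : TX ⟶ X) (p : X ⟶ FX),
    T TX ∧ F FX ∧ IsShortExact i p

/-- A reduced crossed complex (crossed complex in groups): a proper chain complex of groups
`⋯ → M_n → M_{n-1} → ⋯ → M_1 → M_0` with actions of `M_0` on each `M_{n+1}`, such that
`M_n` is abelian for `n ≥ 2`, elements of `δ₁(M₁)` act trivially on `M_n` for `n ≥ 2`,
the differentials are `M₀`-equivariant and `δ₁ : M₁ → M₀` is a crossed module. -/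
structure Crs : Type 1 where
  M : ℕ → Type
  [grp : ∀ n, Group (M n)]
  δ : ∀ n : ℕ, M (n + 1) →* M n
  chain : ∀ (n : ℕ) (x : M (n + 2)), δ n (δ (n + 1) x) = 1
  act : ∀ n : ℕ, M 0 →* MulAut (M (n + 1))
  comm : ∀ (n : ℕ) (x y : M (n + 2)), x * y = y * x
  proper : ∀ (n : ℕ) (g : M n) (x : M (n + 1)), ∃ y : M (n + 1), g * δ n x * g⁻¹ = δ n y
  actTriv : ∀ (n : ℕ) (m : M 1) (x : M (n + 2)), act (n + 1) (δ 0 m) x = x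
  equivar : ∀ (n : ℕ) (m₀ : M 0) (x : M (n + 2)),
    δ (n + 1) (act (n + 1) m₀ x) = act n m₀ (δ (n + 1) x)
  xmodEquivar : ∀ (m₀ : M 0) (m : M 1), δ 0 (act 0 m₀ m) = m₀ * δ 0 m * m₀⁻¹
  peiffer : ∀ (m m' : M 1), act 0 (δ 0 m) m' = m * m' * m⁻¹

attribute [instance] Crs.grp

/-- A morphism of reduced crossed complexes: a chain map preserving the actions. -/
structure CrsHom (K L : Crs) where
  f : ∀ n : ℕ, K.M n →* L.M n
  comm : ∀ (n : ℕ) (x : K.M (n + 1)), f n (K.δ n x) = L.δ n (f (n + 1) x)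
  actComm : ∀ (n : ℕ) (m₀ : K.M 0) (x : K.M (n + 1)),
    f (n + 1) (K.act n m₀ x) = L.act n (f 0 m₀) (f (n + 1) x)

theorem CrsHom.ext' {K L : Crs} {f g : CrsHom K L} (h : ∀ n, f.f n = g.f n) : f = g := by
  cases f; cases g
  simp only [CrsHom.mk.injEq]
  exact funext h

/-- The category of reduced crossed complexes. -/
instance : Category Crs where
  Hom := CrsHom
  id K := { f := fun n => MonoidHom.id _, comm := fun _ _ => rfl, actComm := fun _ _ _ => rfl }
  comp {K L P} f g :=
    { f := fun n => (g.f n).comp (f.f n)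
      comm := fun n x => by simp only [MonoidHom.comp_apply, f.comm, g.comm]
      actComm := fun n m₀ x => by simp only [MonoidHom.comp_apply, f.actComm, g.actComm] }
  id_comp f := CrsHom.ext' fun n => rfl
  comp_id f := CrsHom.ext' fun n => rfl
  assoc f g h := CrsHom.ext' fun n => rfl

/-- The category of reduced crossed complexes has zero morphisms. -/
instance : HasZeroMorphisms Crs where
  zero K L :=
    ⟨{ f := fun n => 1
       comm := fun n x => by simp
       actComm := fun n m₀ x => by simp }⟩
  comp_zero {K L} f P := CrsHom.ext' fun n => MonoidHom.one_comp _
  zero_comp K {L P} f := CrsHom.ext' fun n => MonoidHom.comp_one _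


namespace CrsTrunc

variable (X : Crs) (n : ℕ)

/-- The subgroup of `X.M i` which is everything below degree `n` and trivial from `n` on. -/
def sgl (i : ℕ) : Subgroup (X.M i) := if n ≤ i then ⊥ else ⊤

lemma mem_sgl {i : ℕ} {x : X.M i} : x ∈ sgl X n i ↔ (n ≤ i → x = 1) := by
  unfold sgl; split_ifs with h <;> simp [h]

/-- The subgroup of `X.M i` which is trivial below degree `n` and everything from `n` on. -/
def sglGE (i : ℕ) : Subgroup (X.M i) := if n ≤ i then ⊤ else ⊥

lemma mem_sglGE {i : ℕ} {x : X.M i} : x ∈ sglGE X n i ↔ (¬ n ≤ i → x = 1) := by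
  unfold sglGE; split_ifs with h <;> simp [h]

/-- Differential for the low truncation. -/
def tδ (i : ℕ) : sgl X n (i+1) →* sgl X n i where
  toFun x := ⟨X.δ i x.val, (mem_sgl X n).2 fun h => by
    rw [(mem_sgl X n).1 x.2 (h.trans (Nat.le_succ i)), map_one]⟩
  map_one' := Subtype.ext (by simp)
  map_mul' a b := Subtype.ext (by simp)

@[simp] lemma tδ_val (i : ℕ) (x : sgl X n (i+1)) : (tδ X n i x).val = X.δ i x.val := rfl

/-- The automorphism of `sgl X n (i+1)` induced by the action of `m₀`. -/
def taux (i : ℕ) (m₀ : X.M 0) : (sgl X n (i+1)) ≃* (sgl X n (i+1)) where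
  toFun x := ⟨X.act i m₀ x.val, (mem_sgl X n).2 fun h => by
    rw [(mem_sgl X n).1 x.2 h, map_one]⟩
  invFun x := ⟨X.act i m₀⁻¹ x.val, (mem_sgl X n).2 fun h => by
    rw [(mem_sgl X n).1 x.2 h, map_one]⟩
  left_inv x := Subtype.ext (by simp [map_inv])
  right_inv x := Subtype.ext (by simp [map_inv])
  map_mul' x y := Subtype.ext (by simp)

@[simp] lemma taux_val (i : ℕ) (m₀ : X.M 0) (x : sgl X n (i+1)) :
    (taux X n i m₀ x).val = X.act i m₀ x.val := rfl

/-- Action for the low truncation. -/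
def tact (i : ℕ) : sgl X n 0 →* MulAut (sgl X n (i+1)) where
  toFun m₀ := taux X n i m₀.val
  map_one' := by ext x; simp [taux]
  map_mul' a b := by ext x; simp [taux]

@[simp] lemma tact_val (i : ℕ) (m₀ : sgl X n 0) (x : sgl X n (i+1)) :
    (tact X n i m₀ x).val = X.act i m₀.val x.val := rfl

/-- The truncation of `X` keeping degrees `< n`. -/
def truncT : Crs where
  M i := sgl X n i
  δ := tδ X n
  chain i x := Subtype.ext (X.chain i x.val)
  act := tact X n
  comm i x y := Subtype.ext (X.comm i x.val y.val)
  proper i g x := by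
    by_cases h1 : n ≤ i + 1
    · refine ⟨x, Subtype.ext ?_⟩
      show g.val * (tδ X n i x).val * g.val⁻¹ = (tδ X n i x).val
      rw [tδ_val, (mem_sgl X n).1 x.2 h1, map_one]
      group
    · obtain ⟨y, hy⟩ := X.proper i g.val x.val
      exact ⟨⟨y, (mem_sgl X n).2 fun h => absurd h h1⟩, Subtype.ext hy⟩
  actTriv i m x := Subtype.ext (X.actTriv i m.val x.val)
  equivar i m₀ x := Subtype.ext (X.equivar i m₀.val x.val)
  xmodEquivar m₀ m := Subtype.ext (X.xmodEquivar m₀.val m.val)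
  peiffer m m' := Subtype.ext (X.peiffer m.val m'.val)

/-- The inclusion of the truncation into `X`. -/
def ι : truncT X n ⟶ X where
  f i := (sgl X n i).subtype
  comm _ _ := rfl
  actComm _ _ _ := rfl

/-- Differential for the high truncation. -/
def fδ (i : ℕ) : sglGE X n (i+1) →* sglGE X n i where
  toFun x := ⟨if n ≤ i then X.δ i x.val else 1, (mem_sglGE X n).2 fun h => if_neg h⟩
  map_one' := Subtype.ext (by split_ifs <;> simp)
  map_mul' a b := Subtype.ext (by split_ifs <;> simp)

@[simp] lemma fδ_val (i : ℕ) (x : sglGE X n (i+1)) :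
    (fδ X n i x).val = if n ≤ i then X.δ i x.val else 1 := rfl

/-- The truncation of `X` keeping degrees `≥ n`. -/
def truncF (hn : 2 ≤ n) : Crs where
  M i := sglGE X n i
  δ := fδ X n
  chain i x := Subtype.ext (by
    rw [fδ_val]
    by_cases h : n ≤ i
    · rw [if_pos h, fδ_val, if_pos (h.trans (Nat.le_succ i))]
      exact X.chain i x.val
    · exact if_neg h)
  act _ := 1
  comm i x y := Subtype.ext (X.comm i x.val y.val)
  proper i g x := by
    refine ⟨x, Subtype.ext ?_⟩
    show g.val * (fδ X n i x).val * g.val⁻¹ = (fδ X n i x).val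
    by_cases h : n ≤ i
    · obtain ⟨k, rfl⟩ := Nat.exists_eq_add_of_le' (hn.trans h)
      rw [X.comm k g.val]; group
    · rw [(mem_sglGE X n).1 g.2 h]; group
  actTriv i m x := rfl
  equivar i m₀ x := rfl
  xmodEquivar m₀ m := Subtype.ext (by
    have h0 : ¬ n ≤ 0 := by omega
    show (fδ X n 0 _).val = (m₀ * fδ X n 0 m * m₀⁻¹).val
    rw [Subgroup.coe_mul, Subgroup.coe_mul, Subgroup.coe_inv, fδ_val, fδ_val,
      if_neg h0, if_neg h0, (mem_sglGE X n).1 m₀.2 h0]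
    group)
  peiffer m m' := Subtype.ext (by
    have h1 : ¬ n ≤ 1 := by omega
    show m'.val = (m * m' * m⁻¹).val
    rw [Subgroup.coe_mul, Subgroup.coe_mul, Subgroup.coe_inv,
      (mem_sglGE X n).1 m.2 h1, (mem_sglGE X n).1 m'.2 h1]
    group)

lemma subsingleton_sgl {i : ℕ} (h : n ≤ i) : Subsingleton (sgl X n i) :=
  ⟨fun a b => Subtype.ext (by rw [(mem_sgl X n).1 a.2 h, (mem_sgl X n).1 b.2 h])⟩

lemma subsingleton_sglGE {i : ℕ} (h : i < n) : Subsingleton (sglGE X n i) :=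
  ⟨fun a b => Subtype.ext (by
    rw [(mem_sglGE X n).1 a.2 (by omega), (mem_sglGE X n).1 b.2 (by omega)])⟩

@[simp] lemma truncF_act_apply (hn : 2 ≤ n) (i : ℕ) (m₀ : (truncF X n hn).M 0)
    (x : (truncF X n hn).M (i+1)) : (truncF X n hn).act i m₀ x = x := rfl

/-- The projection onto the high truncation, for `X` with trivial action in high degrees. -/
def pmor (hn : 2 ≤ n)
    (hE : ∀ i : ℕ, n ≤ i + 1 → ∀ (m₀ : X.M 0) (x : X.M (i + 1)), X.act i m₀ x = x) :
    X ⟶ truncF X n hn where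
  f i :=
    { toFun := fun x => ⟨if n ≤ i then x else 1, (mem_sglGE X n).2 fun h => if_neg h⟩
      map_one' := Subtype.ext (by split_ifs <;> rfl)
      map_mul' := fun a b => Subtype.ext (by
        show (if n ≤ i then a * b else 1) = (if n ≤ i then a else 1) * (if n ≤ i then b else 1)
        split_ifs <;> simp) }
  comm i x := Subtype.ext (by
    show (if n ≤ i then X.δ i x else 1) = (fδ X n i _).val
    show (if n ≤ i then X.δ i x else 1) = (if n ≤ i then X.δ i (if n ≤ i + 1 then x else 1) else 1)
    by_cases h : n ≤ i
    · rw [if_pos h, if_pos h]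
      show X.δ i x = X.δ i (if n ≤ i + 1 then x else 1)
      rw [if_pos (h.trans (Nat.le_succ i))]
    · rw [if_neg h, if_neg h])
  actComm i m₀ x := Subtype.ext (by
    rw [truncF_act_apply]
    show (if n ≤ i + 1 then X.act i m₀ x else 1) = (if n ≤ i + 1 then x else 1)
    by_cases h : n ≤ i + 1
    · rw [if_pos h, if_pos h, hE i h]
    · rw [if_neg h, if_neg h])

@[simp] lemma pmor_val (hn : 2 ≤ n) (hE) (i : ℕ) (x : X.M i) :
    ((pmor X n hn hE).f i x).val = if n ≤ i then x else 1 := rfl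

/-- Lift a morphism vanishing in high degrees through the inclusion of the truncation. -/
def liftT {W : Crs} (g : W ⟶ X) (hg : ∀ i : ℕ, n ≤ i → ∀ x : W.M i, g.f i x = 1) :
    W ⟶ truncT X n where
  f i :=
    { toFun := fun x => ⟨g.f i x, (mem_sgl X n).2 fun h => hg i h x⟩
      map_one' := Subtype.ext (map_one _)
      map_mul' := fun a b => Subtype.ext (map_mul _ _ _) }
  comm i x := Subtype.ext (g.comm i x)
  actComm i m₀ x := Subtype.ext (g.actComm i m₀ x)

lemma liftT_comp_ι {W : Crs} (g : W ⟶ X) (hg) : liftT X n g hg ≫ ι X n = g :=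
  CrsHom.ext' fun i => rfl

lemma liftT_unique {W : Crs} (g : W ⟶ X) (hg) (m : W ⟶ truncT X n)
    (hm : m ≫ ι X n = g) : m = liftT X n g hg := by
  refine CrsHom.ext' fun i => MonoidHom.ext fun x => Subtype.ext ?_
  exact congrArg (fun φ : W ⟶ X => φ.f i x) hm

/-- Descend a morphism vanishing in low degrees through the projection. -/
def descF (hn : 2 ≤ n) {W : Crs} (c : X ⟶ W)
    (hc : ∀ i : ℕ, ¬ n ≤ i → ∀ x : X.M i, c.f i x = 1) : truncF X n hn ⟶ W where
  f i := (c.f i).comp (sglGE X n i).subtype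
  comm i x := by
    show c.f i (fδ X n i x).val = W.δ i (c.f (i+1) x.val)
    show c.f i (if n ≤ i then X.δ i x.val else 1) = W.δ i (c.f (i+1) x.val)
    by_cases h : n ≤ i
    · rw [if_pos h]; exact c.comm i x.val
    · rw [if_neg h, map_one, ← c.comm i x.val, hc i h]
  actComm i m₀ x := by
    rw [truncF_act_apply]
    show c.f (i+1) x.val = W.act i (c.f 0 m₀.val) (c.f (i+1) x.val)
    rw [hc 0 (by omega) m₀.val, map_one]
    rfl

lemma pmor_comp_descF (hn : 2 ≤ n) (hE) {W : Crs} (c : X ⟶ W) (hc) :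
    pmor X n hn hE ≫ descF X n hn c hc = c := by
  refine CrsHom.ext' fun i => MonoidHom.ext fun x => ?_
  show c.f i (if n ≤ i then x else 1) = c.f i x
  by_cases h : n ≤ i
  · rw [if_pos h]
  · rw [if_neg h, map_one, hc i h]

lemma descF_unique (hn : 2 ≤ n) (hE) {W : Crs} (c : X ⟶ W) (hc)
    (m : truncF X n hn ⟶ W) (hm : pmor X n hn hE ≫ m = c) :
    m = descF X n hn c hc := by
  refine CrsHom.ext' fun i => MonoidHom.ext fun y => ?_
  by_cases h : n ≤ i
  · have hy : (pmor X n hn hE).f i y.val = y := Subtype.ext (by rw [pmor_val, if_pos h])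
    calc m.f i y = m.f i ((pmor X n hn hE).f i y.val) := by rw [hy]
      _ = c.f i y.val := congrArg (fun φ : X ⟶ W => φ.f i y.val) hm
      _ = (descF X n hn c hc).f i y := rfl
  · have : Subsingleton ((truncF X n hn).M i) := subsingleton_sglGE X n (by omega)
    have hy : y = 1 := Subsingleton.elim y 1
    rw [hy, map_one, map_one]

@[simp] lemma zero_f (K L : Crs) (i : ℕ) : (0 : K ⟶ L).f i = 1 := rfl

lemma comp_pmor_zero (hn : 2 ≤ n) (hE) : ι X n ≫ pmor X n hn hE = 0 := by
  refine CrsHom.ext' fun i => MonoidHom.ext fun x => Subtype.ext ?_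
  show (if n ≤ i then x.val else 1) = ((0 : truncT X n ⟶ truncF X n hn).f i x).val
  by_cases h : n ≤ i
  · rw [if_pos h, (mem_sgl X n).1 x.2 h]; rfl
  · rw [if_neg h]; rfl

lemma ses (hn : 2 ≤ n)
    (hE : ∀ i : ℕ, n ≤ i + 1 → ∀ (m₀ : X.M 0) (x : X.M (i + 1)), X.act i m₀ x = x) :
    IsShortExact (ι X n) (pmor X n hn hE) := by
  refine ⟨comp_pmor_zero X n hn hE, ⟨?_⟩, ⟨?_⟩⟩
  · refine CategoryTheory.Limits.KernelFork.IsLimit.ofι _ _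
      (fun {W} g hg => liftT X n g ?_) (fun {W} g hg => liftT_comp_ι X n g _)
      (fun {W} g hg m hm => liftT_unique X n g _ m hm)
    intro i h x
    have h2 : (if n ≤ i then g.f i x else 1) = 1 :=
      congrArg (fun φ : W ⟶ truncF X n hn => (φ.f i x).val) hg
    rwa [if_pos h] at h2
  · refine CategoryTheory.Limits.CokernelCofork.IsColimit.ofπ _ _
      (fun {W} c hc => descF X n hn c ?_) (fun {W} c hc => pmor_comp_descF X n hn hE c _)
      (fun {W} c hc m hm => descF_unique X n hn hE c _ m hm)
    intro i h x
    exact congrArg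
      (fun φ : truncT X n ⟶ W => φ.f i ⟨x, (mem_sgl X n).2 fun h' => absurd h' h⟩) hc
end CrsTrunc

/-- Let `n ≥ 2`.  In the category `Crs(Grp)` of reduced crossed
complexes: (i) for every `M`, the inclusion of its truncation keeping degrees `≤ n-1`
(trivial in degrees `≥ n`) is a monomorphism and these inclusions are the counit
components of the coreflection onto `Crs(Grp)_{n-1≥}`; (ii) the pair
`(Crs(Grp)_{n-1≥}, Crs(Grp)_{≥n})` is an `ℰ`-torsion theory, where `ℰ` is the class of
reduced crossed complexes on which `M₀` acts trivially in all degrees `≥ n`, the short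
exact sequence of `M ∈ ℰ` being given by the two truncations; (iii) every reduced crossed
complex with surjective `δ₁ : M₁ → M₀` belongs to `ℰ`. -/
theorem crs_truncation_coreflective_relTorsionTheory (n : ℕ) (hn : 2 ≤ n) :
    (∀ X : Crs, ∃ (T : Crs) (ι : T ⟶ X),
      (∀ i : ℕ, i < n → Function.Bijective (CrsHom.f ι i)) ∧
      (∀ i : ℕ, n ≤ i → Subsingleton (T.M i)) ∧
      Mono ι ∧
      (∀ S : Crs, (∀ i : ℕ, n ≤ i → Subsingleton (S.M i)) →
        ∀ g : S ⟶ X, ∃! h : S ⟶ T, h ≫ ι = g)) ∧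
    IsRelTorsionTheory (C := Crs)
      (fun X => ∀ i : ℕ, n ≤ i + 1 →
        ∀ (m₀ : X.M 0) (x : X.M (i + 1)), X.act i m₀ x = x)
      (fun X => ∀ i : ℕ, n ≤ i → Subsingleton (X.M i))
      (fun X => ∀ i : ℕ, i < n → Subsingleton (X.M i)) ∧
    (∀ X : Crs,
      (∀ i : ℕ, n ≤ i + 1 → ∀ (m₀ : X.M 0) (x : X.M (i + 1)), X.act i m₀ x = x) →
      ∃ (T F : Crs) (ι : T ⟶ X) (p : X ⟶ F),
        (∀ i : ℕ, n ≤ i → Subsingleton (T.M i)) ∧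
        (∀ i : ℕ, i < n → Subsingleton (F.M i)) ∧
        IsShortExact ι p ∧
        (∀ i : ℕ, i < n → Function.Bijective (CrsHom.f ι i)) ∧
        (∀ i : ℕ, n ≤ i → Function.Bijective (CrsHom.f p i))) ∧
    (∀ X : Crs, Function.Surjective (X.δ 0) →
      ∀ i : ℕ, n ≤ i + 1 → ∀ (m₀ : X.M 0) (x : X.M (i + 1)), X.act i m₀ x = x) := by
  refine ⟨?_, ?_, ?_, ?_⟩
  · -- (i) coreflection
    intro X
    refine ⟨CrsTrunc.truncT X n, CrsTrunc.ι X n, ?_, ?_, ?_, ?_⟩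
    · intro i hi
      exact ⟨Subtype.val_injective, fun x =>
        ⟨⟨x, (CrsTrunc.mem_sgl X n).2 fun h => absurd h (by omega)⟩, rfl⟩⟩
    · intro i hi; exact CrsTrunc.subsingleton_sgl X n hi
    · constructor
      intro Z a b hab
      refine CrsHom.ext' fun i => MonoidHom.ext fun x => Subtype.ext ?_
      exact congrArg (fun φ : Z ⟶ X => φ.f i x) hab
    · intro S hS g
      have hg : ∀ i, n ≤ i → ∀ x : S.M i, g.f i x = 1 := by
        intro i hi x
        have : Subsingleton (S.M i) := hS i hi
        rw [Subsingleton.elim x 1, map_one]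
      exact ⟨CrsTrunc.liftT X n g hg, CrsTrunc.liftT_comp_ι X n g hg,
        fun m hm => CrsTrunc.liftT_unique X n g hg m hm⟩
  · -- (ii) torsion theory
    constructor
    · intro X Y f hT hF
      refine CrsHom.ext' fun i => MonoidHom.ext fun x => ?_
      by_cases h : n ≤ i
      · have : Subsingleton (X.M i) := hT i h
        rw [Subsingleton.elim x 1, map_one]; rfl
      · have : Subsingleton (Y.M i) := hF i (by omega)
        exact Subsingleton.elim _ _
    · intro X hX
      exact ⟨CrsTrunc.truncT X n, CrsTrunc.truncF X n hn, CrsTrunc.ι X n,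
        CrsTrunc.pmor X n hn hX, fun i hi => CrsTrunc.subsingleton_sgl X n hi,
        fun i hi => CrsTrunc.subsingleton_sglGE X n hi, CrsTrunc.ses X n hn hX⟩
  · -- (ii') the SES via truncations
    intro X hX
    refine ⟨CrsTrunc.truncT X n, CrsTrunc.truncF X n hn, CrsTrunc.ι X n,
      CrsTrunc.pmor X n hn hX, fun i hi => CrsTrunc.subsingleton_sgl X n hi,
      fun i hi => CrsTrunc.subsingleton_sglGE X n hi, CrsTrunc.ses X n hn hX, ?_, ?_⟩
    · intro i hi
      exact ⟨Subtype.val_injective, fun x =>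
        ⟨⟨x, (CrsTrunc.mem_sgl X n).2 fun h => absurd h (by omega)⟩, rfl⟩⟩
    · intro i hi
      constructor
      · intro a b hab
        have := congrArg Subtype.val hab
        rwa [CrsTrunc.pmor_val, CrsTrunc.pmor_val, if_pos hi, if_pos hi] at this
      · intro y
        exact ⟨y.val, Subtype.ext (by rw [CrsTrunc.pmor_val, if_pos hi])⟩
  · -- (iii) surjective δ₁ implies trivial action in high degrees
    intro X hδ i hi m₀ x
    obtain ⟨m, rfl⟩ := hδ m₀
    obtain ⟨j, rfl⟩ : ∃ j, i = j + 1 := ⟨i - 1, by omega⟩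
    exact X.actTriv j m x
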